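/- Let ∧ be a semilattice operation on A and S = ⟨∧⟩. If f_2 is a nonconstant operation, f_1 is an S-minor of f_2, and f_1 is not S-equivalent to f_2, then either deg_S f_1 < deg_S f_2, or deg_S f_1 = deg_S f_2 = m and for any fixed m-ary g, the set systems X(φ) ⊆ P([m]) arising from minimal S-decompositions f_1 = g(φ'_1,...,φ'_m) and f_2 = g(φ_1,...,φ_m) with φ'_j = φ_j(h_1,...,h_n) differ. -/

import Mathlib

variable {A : Type*}

/-- Composition of an n-ary operation with n m-ary operations. -/
def Comp {n m : ℕ} (f : (Fin n → A) → A) (g : Fin n → (Fin m → A) → A) :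
    (Fin m → A) → A := fun a => f fun i => g i a

/-- A clone: contains all projections and is closed under composition. -/
def IsClone (C : ∀ n, Set ((Fin n → A) → A)) : Prop :=
  (∀ (n : ℕ) (i : Fin n), (fun a : Fin n → A => a i) ∈ C n) ∧
  ∀ (n m : ℕ) (f : (Fin n → A) → A) (g : Fin n → (Fin m → A) → A),
    f ∈ C n → (∀ i, g i ∈ C m) → Comp f g ∈ C m

/-- `f` is a `C`-minor of `g`. -/
def Minor (C : ∀ n, Set ((Fin n → A) → A)) {n m : ℕ}
    (f : (Fin n → A) → A) (g : (Fin m → A) → A) : Prop :=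
  ∃ h : Fin m → (Fin n → A) → A, (∀ i, h i ∈ C n) ∧ f = Comp g h

/-- `f` and `g` are `C`-equivalent. -/
def CEquiv (C : ∀ n, Set ((Fin n → A) → A)) {n m : ℕ}
    (f : (Fin n → A) → A) (g : (Fin m → A) → A) : Prop :=
  Minor C f g ∧ Minor C g f

/-- The clone generated by a family of operations. -/
def CloneGen (F : ∀ n, Set ((Fin n → A) → A)) : ∀ n, Set ((Fin n → A) → A) :=
  fun n => {f | ∀ C, IsClone C → (∀ k, F k ⊆ C k) → f ∈ C n}

/-- The family consisting of just the binary semilattice (meet) operation. -/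
def meetFam (A : Type*) [SemilatticeInf A] : ∀ n, Set ((Fin n → A) → A)
  | 2 => {fun a => a 0 ⊓ a 1}
  | _ => ∅

/-- The clone generated by the semilattice operation `⊓`. -/
def SClone (A : Type*) [SemilatticeInf A] : ∀ n, Set ((Fin n → A) → A) :=
  CloneGen (meetFam A)

/-- The `C`-degree of an operation: 0 for constants, otherwise the least arity of
an outer function in a `C`-decomposition. -/
noncomputable def degC (C : ∀ n, Set ((Fin n → A) → A)) {n : ℕ}
    (f : (Fin n → A) → A) : ℕ :=
  letI := Classical.dec (∃ c : A, f = fun _ => c)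
  if (∃ c : A, f = fun _ => c) then 0
  else sInf {m | ∃ g : (Fin m → A) → A, Minor C f g}

-- auxiliary lemmas

lemma isClone_cloneGen (F : ∀ n, Set ((Fin n → A) → A)) : IsClone (CloneGen F) := by
  constructor
  · intro n i C hC _; exact hC.1 n i
  · intro n m f g hf hg C hC hF
    exact hC.2 n m f g (hf C hC hF) (fun i => hg i C hC hF)

lemma meet_mem_sclone (A : Type*) [SemilatticeInf A] :
    (fun a : Fin 2 → A => a 0 ⊓ a 1) ∈ SClone A 2 := by
  intro C _ hF
  exact hF 2 rfl

lemma inf'_mem_sclone [SemilatticeInf A] {n : ℕ} (s : Finset (Fin n)) (hs : s.Nonempty) :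
    (fun x : Fin n → A => s.inf' hs x) ∈ SClone A n := by
  induction hs using Finset.Nonempty.cons_induction with
  | singleton a => simpa [SClone] using (isClone_cloneGen (meetFam A)).1 n a
  | cons a s ha hs ih =>
      have : (fun x : Fin n → A => (Finset.cons a s ha).inf' (Finset.cons_nonempty ha) x)
          = Comp (fun a : Fin 2 → A => a 0 ⊓ a 1)
              ![fun x => x a, fun x => s.inf' hs x] := by
        funext x
        simp [Comp, Finset.inf'_insert (H := hs)]
      rw [this]
      exact (isClone_cloneGen (meetFam A)).2 2 n _ _ (meet_mem_sclone A)
        (by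
          intro i
          fin_cases i
          · simpa using (isClone_cloneGen (meetFam A)).1 n a
          · simpa [SClone] using ih)

lemma minor_trans {C : ∀ n, Set ((Fin n → A) → A)} (hC : IsClone C) {n m k : ℕ}
    {f : (Fin n → A) → A} {g : (Fin m → A) → A} {e : (Fin k → A) → A}
    (h1 : Minor C f g) (h2 : Minor C g e) : Minor C f e := by
  obtain ⟨h, hh, rfl⟩ := h1
  obtain ⟨h', hh', rfl⟩ := h2
  exact ⟨fun i => Comp (h' i) h, fun i => hC.2 _ _ _ _ (hh' i) hh, rfl⟩

lemma minor_self {C : ∀ n, Set ((Fin n → A) → A)} (hC : IsClone C) {n : ℕ}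
    (f : (Fin n → A) → A) : Minor C f f :=
  ⟨fun i => fun a => a i, fun i => hC.1 n i, rfl⟩

theorem degC_le_of_minor {A : Type*} [SemilatticeInf A] {n₁ n₂ : ℕ}
    (f₁ : (Fin n₁ → A) → A) (f₂ : (Fin n₂ → A) → A)
    (hmin : Minor (SClone A) f₁ f₂) :
    degC (SClone A) f₁ ≤ degC (SClone A) f₂ := by
  by_cases hc : ∃ c : A, f₁ = fun _ => c
  · simp [degC, hc]
  · have hc2 : ¬ ∃ c : A, f₂ = fun _ => c := by
      rintro ⟨c, rfl⟩
      obtain ⟨h, -, rfl⟩ := hmin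
      exact hc ⟨c, rfl⟩
    simp only [degC, if_neg hc, if_neg hc2]
    refine csInf_le_csInf (OrderBot.bddBelow _)
      ⟨n₂, show ∃ g : (Fin n₂ → A) → A, Minor (SClone A) f₂ g from
        ⟨f₂, minor_self (isClone_cloneGen _) f₂⟩⟩ ?_
    rintro m ⟨g, hg⟩
    exact ⟨g, minor_trans (isClone_cloneGen _) hmin hg⟩


/-- If `f₁` is a proper `S`-minor of a nonconstant `f₂` (not `S`-equivalent to
it), then either the `S`-degree strictly drops, or the degrees agree and any
two minimal `S`-decompositions `f₂ = g(φ)` and `f₁ = g(φ')` with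
`φ'_j = φ_j(h_1, …, h_n)` have different associated set systems. -/
theorem stmt16 {A : Type*} [SemilatticeInf A] {n₁ n₂ : ℕ}
    (f₁ : (Fin n₁ → A) → A) (f₂ : (Fin n₂ → A) → A)
    (hnc : ¬ ∃ c : A, f₂ = fun _ => c)
    (hmin : Minor (SClone A) f₁ f₂)
    (hneq : ¬ CEquiv (SClone A) f₁ f₂) :
    degC (SClone A) f₁ < degC (SClone A) f₂ ∨
    (degC (SClone A) f₁ = degC (SClone A) f₂ ∧
      ∀ (g : (Fin (degC (SClone A) f₂) → A) → A)
        (φ : Fin (degC (SClone A) f₂) → (Fin n₂ → A) → A)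
        (Φ : Fin (degC (SClone A) f₂) → Finset (Fin n₂))
        (hΦ : ∀ j, (Φ j).Nonempty),
        (∀ j, φ j = fun x => (Φ j).inf' (hΦ j) x) →
        f₂ = Comp g φ →
        ∀ h : Fin n₂ → (Fin n₁ → A) → A, (∀ i, h i ∈ SClone A n₁) →
          f₁ = Comp f₂ h →
          ∀ (Φ' : Fin (degC (SClone A) f₂) → Finset (Fin n₁))
            (hΦ' : ∀ j, (Φ' j).Nonempty),
            (∀ j, Comp (φ j) h = fun x => (Φ' j).inf' (hΦ' j) x) →
            Finset.image (fun i => Finset.univ.filter fun j => i ∈ Φ j)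
                (Finset.univ : Finset (Fin n₂)) ≠
              Finset.image (fun i => Finset.univ.filter fun j => i ∈ Φ' j)
                (Finset.univ : Finset (Fin n₁))) := by
  rcases lt_or_eq_of_le (degC_le_of_minor f₁ f₂ hmin) with hlt | heqdeg
  · exact Or.inl hlt
  · refine Or.inr ⟨heqdeg, ?_⟩
    intro g φ Φ hΦ hφ hf₂ h hh hf₁ Φ' hΦ' hφ' heq
    apply hneq
    refine ⟨hmin, ?_⟩
    classical
    let X : Fin n₂ → Finset (Fin (degC (SClone A) f₂)) :=
      fun i => Finset.univ.filter fun j => i ∈ Φ j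
    let X' : Fin n₁ → Finset (Fin (degC (SClone A) f₂)) :=
      fun i => Finset.univ.filter fun j => i ∈ Φ' j
    have heq' : Finset.image X Finset.univ = Finset.image X' Finset.univ := heq
    have hex : ∀ i₁ : Fin n₁, ∃ i₂ : Fin n₂, X i₂ = X' i₁ := by
      intro i₁
      have h1 : X' i₁ ∈ Finset.image X' Finset.univ :=
        Finset.mem_image_of_mem _ (Finset.mem_univ _)
      rw [← heq'] at h1
      obtain ⟨i₂, -, h2⟩ := Finset.mem_image.mp h1
      exact ⟨i₂, h2⟩
    have hex2 : ∀ i₂ : Fin n₂, ∃ i₁ : Fin n₁, X' i₁ = X i₂ := by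
      intro i₂
      have h1 : X i₂ ∈ Finset.image X Finset.univ :=
        Finset.mem_image_of_mem _ (Finset.mem_univ _)
      rw [heq'] at h1
      obtain ⟨i₁, -, h2⟩ := Finset.mem_image.mp h1
      exact ⟨i₁, h2⟩
    let Y : Fin n₁ → Finset (Fin n₂) :=
      fun i₁ => Finset.univ.filter fun i₂ => X i₂ = X' i₁
    have hY : ∀ i₁, (Y i₁).Nonempty := by
      intro i₁; obtain ⟨i₂, hi₂⟩ := hex i₁
      exact ⟨i₂, by simp [Y, hi₂]⟩
    have hmemX : ∀ i j, i ∈ Φ j ↔ j ∈ X i := by intro i j; simp [X]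
    have hmemX' : ∀ i j, i ∈ Φ' j ↔ j ∈ X' i := by intro i j; simp [X']
    have hbU : ∀ j, (Φ' j).biUnion Y = Φ j := by
      intro j; ext i₂
      simp only [Finset.mem_biUnion, Y, Finset.mem_filter, Finset.mem_univ, true_and]
      constructor
      · rintro ⟨i₁, hi₁, hXX⟩
        rw [hmemX, hXX, ← hmemX']; exact hi₁
      · intro hi₂
        obtain ⟨i₁, hi₁⟩ := hex2 i₂
        refine ⟨i₁, ?_, hi₁.symm⟩
        rw [hmemX', hi₁, ← hmemX]; exact hi₂
    have hf₁' : ∀ b, f₁ b = g fun j => (Φ' j).inf' (hΦ' j) b := by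
      intro b
      have h1 : f₁ b = f₂ fun i => h i b := congrFun hf₁ b
      have h2 : f₂ (fun i => h i b) = g fun j => φ j fun i => h i b := congrFun hf₂ _
      exact h1.trans (h2.trans (congrArg g (funext fun j => congrFun (hφ' j) b)))
    refine ⟨fun i₁ => fun a => (Y i₁).inf' (hY i₁) a,
      fun i₁ => inf'_mem_sclone _ _, ?_⟩
    funext a
    show f₂ a = f₁ fun i₁ => (Y i₁).inf' (hY i₁) a
    rw [hf₁']
    refine (congrFun hf₂ a).trans (congrArg g (funext fun j => ?_))
    rw [show φ j a = (Φ j).inf' (hΦ j) a from congrFun (hφ j) a]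
    rw [← Finset.inf'_biUnion (f := a) (hΦ' j) hY]
    exact Finset.inf'_congr _ (hbU j).symm (fun _ _ => rfl)
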